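/- For a two-step path map α : I_2 → G with arrows α_1, α_2, the iterated integral satisfies ∫_α ω_1···ω_r = Σ_{k=0}^{r} ⟨ω_1,α_1⟩···⟨ω_k,α_1⟩⟨ω_{k+1},α_2⟩···⟨ω_r,α_2⟩ / (k!(r-k)!). -/

import Mathlib

open Finset

attribute [local instance] Classical.propDecidable

/-- A digraph: vertex type `V`, arrow relation without self-loops. -/
structure Digraph' (V : Type*) where
  Arrow : V → V → Prop
  irrefl : ∀ v, ¬ Arrow v v

/-- A step of a path map: an arrow `a → b` traversed forward, an arrow `a → b`
traversed backward (from `b` to `a`), or a trivial arrow at a vertex. -/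
inductive PStep (V : Type*) where
  | fwd : V → V → PStep V
  | bwd : V → V → PStep V
  | triv : V → PStep V

namespace PStep
variable {V : Type*}

def src : PStep V → V
  | fwd a _ => a
  | bwd _ b => b
  | triv a => a

def tgt : PStep V → V
  | fwd _ b => b
  | bwd a _ => a
  | triv a => a

/-- The step uses an actual arrow of `G` (or is trivial). -/
def ok (G : Digraph' V) : PStep V → Prop
  | fwd a b => G.Arrow a b
  | bwd a b => G.Arrow a b
  | triv _ => True

/-- The inverse step. -/
def inv : PStep V → PStep V
  | fwd a b => bwd a b
  | bwd a b => fwd a b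
  | triv a => triv a

/-- Pairing `⟨ω, s⟩` of a 1-form with a step: `ω(a)` forward, `-ω(a)` backward,
`0` on trivial arrows. -/
def pair {K : Type*} [Field K] (ω : V → V → K) : PStep V → K
  | fwd a b => ω a b
  | bwd a b => - ω a b
  | triv _ => 0

end PStep

/-- `σ 1, …, σ n` are the steps of a path map `I_n → G`. -/
def IsPathMap {V : Type*} (G : Digraph' V) (n : ℕ) (σ : ℕ → PStep V) : Prop :=
  (∀ t, 1 ≤ t → t ≤ n → (σ t).ok G) ∧
  (∀ t, 1 ≤ t → t < n → (σ t).tgt = (σ (t + 1)).src)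

/-- Volume number of a finite sequence: product of factorials of multiplicities. -/
def volFin {r : ℕ} (g : Fin r → ℕ) : ℕ :=
  ∏ k ∈ Finset.image g Finset.univ,
    Nat.factorial ((Finset.univ.filter (fun j => g j = k)).card)

/-- The iterated integral `∫_α ω_1 ⋯ ω_r` along a path map of length `n`
with steps `σ 1, …, σ n`. -/
noncomputable def iint (K : Type*) [Field K] {V : Type*} (n : ℕ) (σ : ℕ → PStep V)
    (r : ℕ) (ω : Fin r → V → V → K) : K :=
  ∑ f ∈ Finset.univ.filter (fun f : Fin r → Fin n => Monotone f),
    (∏ i, PStep.pair (ω i) (σ ((f i : ℕ) + 1))) / (volFin (fun i => (f i : ℕ)) : K)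

/-- Concatenation of step sequences: the first `n` steps from `σ`, then steps of `τ`. -/
def concatP {V : Type*} (n : ℕ) (σ τ : ℕ → PStep V) : ℕ → PStep V :=
  fun t => if t ≤ n then σ t else τ (t - n)

/-- The inverse path map of a path map of length `n`. -/
def invP {V : Type*} (n : ℕ) (σ : ℕ → PStep V) : ℕ → PStep V :=
  fun t => (σ (n + 1 - t)).inv

/-- Multiplicity of the value `k` in the (1-indexed) sequence `t 1, …, t r`. -/
def multN (t : ℕ → ℕ) (r k : ℕ) : ℕ := ((Finset.Icc 1 r).filter (fun j => t j = k)).card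

/-- Volume number of the sequence `t 1, …, t r`: the product over all `k` of
the factorial of the multiplicity of `k`. -/
noncomputable def volN (t : ℕ → ℕ) (r : ℕ) : ℕ := ∏ᶠ k, Nat.factorial (multN t r k)


lemma cardlt (r m : ℕ) : (Finset.univ.filter (fun j : Fin r => (j:ℕ) < m)).card = min m r := by
  rw [← Finset.card_range (min m r), ← Finset.card_image_of_injective _ Fin.val_injective]
  congr 1
  ext n
  simp only [Finset.mem_image, Finset.mem_filter, Finset.mem_univ, true_and, Finset.mem_range,
    lt_min_iff]
  constructor
  · rintro ⟨j, hj, rfl⟩; exact ⟨hj, j.isLt⟩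
  · rintro ⟨h1, h2⟩; exact ⟨⟨n, h2⟩, h1, rfl⟩

lemma mono_iff {r : ℕ} (f : Fin r → Fin 2) (hf : Monotone f) (i : Fin r) :
    f i = 0 ↔ (i:ℕ) < (Finset.univ.filter (fun j => f j = (0:Fin 2))).card := by
  constructor
  · intro h0
    have hsub : Finset.univ.filter (fun j : Fin r => (j:ℕ) < (i:ℕ)+1) ⊆
        Finset.univ.filter (fun j => f j = (0:Fin 2)) := by
      intro j hj
      simp only [Finset.mem_filter, Finset.mem_univ, true_and] at hj ⊢
      have hji : j ≤ i := by rw [Fin.le_def]; omega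
      exact Fin.le_zero_iff.mp (h0 ▸ hf hji)
    have := Finset.card_le_card hsub
    rw [cardlt] at this
    have := i.isLt
    omega
  · intro hk
    by_contra h0
    have h1 : f i = 1 := by
      have h2 := (f i).isLt
      have h3 : (f i).val ≠ 0 := fun hh => h0 (Fin.ext hh)
      exact Fin.ext (by omega)
    have hsub : Finset.univ.filter (fun j => f j = (0:Fin 2)) ⊆
        Finset.univ.filter (fun j : Fin r => (j:ℕ) < (i:ℕ)) := by
      intro j hj
      simp only [Finset.mem_filter, Finset.mem_univ, true_and] at hj ⊢
      by_contra hlt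
      push_neg at hlt
      have hij : i ≤ j := by rw [Fin.le_def]; omega
      have := hf hij
      rw [h1, hj] at this
      exact absurd this (by decide)
    have := Finset.card_le_card hsub
    rw [cardlt] at this
    omega

lemma vol_eq {r k : ℕ} (hk : k ≤ r) (f : Fin r → Fin 2) (hf : ∀ i, f i = 0 ↔ (i:ℕ) < k) :
    volFin (fun i => ((f i : Fin 2) : ℕ)) = k.factorial * (r - k).factorial := by
  unfold volFin
  have himg : Finset.image (fun i => ((f i : Fin 2) : ℕ)) Finset.univ ⊆ ({0, 1} : Finset ℕ) := by
    intro m hm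
    simp only [Finset.mem_image] at hm
    obtain ⟨j, -, rfl⟩ := hm
    have := (f j).isLt
    simp only [Finset.mem_insert, Finset.mem_singleton]
    omega
  rw [Finset.prod_subset himg (by
    intro m hm hnm
    have : (Finset.univ.filter (fun j => ((f j : Fin 2) : ℕ) = m)).card = 0 := by
      rw [Finset.card_eq_zero, Finset.filter_eq_empty_iff]
      intro j _ hj
      exact hnm (Finset.mem_image.mpr ⟨j, Finset.mem_univ j, hj⟩)
    rw [this]; rfl)]
  rw [show ({0, 1} : Finset ℕ) = insert 0 {1} from rfl,
    Finset.prod_insert (by simp), Finset.prod_singleton]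
  have h0 : (Finset.univ.filter (fun j : Fin r => ((f j : Fin 2) : ℕ) = 0)).card = k := by
    have : (Finset.univ.filter (fun j : Fin r => ((f j : Fin 2) : ℕ) = 0)) =
        (Finset.univ.filter (fun j : Fin r => (j:ℕ) < k)) := by
      apply Finset.filter_congr
      intro j _
      rw [← hf j]
      exact ⟨fun h => Fin.ext h, fun h => by rw [h]; rfl⟩
    rw [this, cardlt]
    omega
  have h1 : (Finset.univ.filter (fun j : Fin r => ((f j : Fin 2) : ℕ) = 1)).card = r - k := by
    have heq : (Finset.univ.filter (fun j : Fin r => ((f j : Fin 2) : ℕ) = 1)) =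
        (Finset.univ.filter (fun j : Fin r => ¬ ((f j : Fin 2) : ℕ) = 0)) := by
      apply Finset.filter_congr
      intro j _
      have := (f j).isLt
      constructor
      · omega
      · intro h; omega
    rw [heq]
    have := Finset.card_filter_add_card_filter_not (s := (Finset.univ : Finset (Fin r)))
      (p := fun j : Fin r => ((f j : Fin 2) : ℕ) = 0)
    rw [h0] at this
    simp only [Finset.card_univ, Fintype.card_fin] at this
    omega
  rw [h0, h1]

/-- For a two-step path map `α : I_2 → G`,
`∫_α ω_1⋯ω_r = Σ_{k=0}^r ⟨ω_1,α_1⟩⋯⟨ω_k,α_1⟩⟨ω_{k+1},α_2⟩⋯⟨ω_r,α_2⟩/(k!(r-k)!)`. -/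
theorem stmt4 {V : Type*} (K : Type*) [Field K] [CharZero K] (G : Digraph' V)
    (σ : ℕ → PStep V) (h : IsPathMap G 2 σ) (r : ℕ) (ω : Fin r → V → V → K) :
    iint K 2 σ r ω = ∑ k ∈ Finset.range (r + 1),
      ((∏ i ∈ Finset.univ.filter (fun i : Fin r => (i : ℕ) < k), PStep.pair (ω i) (σ 1)) *
        ∏ i ∈ Finset.univ.filter (fun i : Fin r => k ≤ (i : ℕ)), PStep.pair (ω i) (σ 2)) /
        ((Nat.factorial k : K) * (Nat.factorial (r - k) : K)) := by
  unfold iint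
  apply Finset.sum_bij'
    (i := fun (f : Fin r → Fin 2) _ => (Finset.univ.filter (fun j => f j = (0:Fin 2))).card)
    (j := fun (k : ℕ) _ => fun i : Fin r => if (i:ℕ) < k then (0 : Fin 2) else 1)
  · intro f hf
    simp only [Finset.mem_range]
    have := Finset.card_filter_le Finset.univ (fun j => f j = (0:Fin 2))
    simp only [Finset.card_univ, Fintype.card_fin] at this
    omega
  · intro k hk
    simp only [Finset.mem_filter, Finset.mem_univ, true_and]
    intro a b hab
    by_cases hb : (b:ℕ) < k
    · have ha : (a:ℕ) < k := lt_of_le_of_lt (by exact_mod_cast hab) hb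
      simp [ha, hb]
    · by_cases ha : (a:ℕ) < k
      · simp only [ha, if_pos, hb, if_neg]
        exact Fin.zero_le _
      · simp [ha, hb]
  · intro f hf
    simp only [Finset.mem_filter, Finset.mem_univ, true_and] at hf
    funext i
    by_cases hi : (i:ℕ) < (Finset.univ.filter (fun j => f j = (0:Fin 2))).card
    · simp only [hi, if_pos]
      exact ((mono_iff f hf i).mpr hi).symm
    · simp only [hi, if_neg]
      have h0 : f i ≠ 0 := fun hh => hi ((mono_iff f hf i).mp hh)
      have h2 := (f i).isLt
      have h3 : (f i).val ≠ 0 := fun hh => h0 (Fin.ext hh)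
      exact (Fin.ext (by omega : ((f i).val = 1))).symm
  · intro k hk
    simp only [Finset.mem_range] at hk
    have : (Finset.univ.filter
        (fun j : Fin r => (if (j:ℕ) < k then (0 : Fin 2) else 1) = 0)) =
        (Finset.univ.filter (fun j : Fin r => (j:ℕ) < k)) := by
      apply Finset.filter_congr
      intro j _
      by_cases hj : (j:ℕ) < k <;> simp [hj]
    rw [this, cardlt]
    omega
  · intro f hf
    simp only [Finset.mem_filter, Finset.mem_univ, true_and] at hf
    set k := (Finset.univ.filter (fun j => f j = (0:Fin 2))).card with hkdef
    have hkr : k ≤ r := by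
      have := Finset.card_filter_le Finset.univ (fun j => f j = (0:Fin 2))
      simpa using this
    have hiff := mono_iff f hf
    congr 1
    · rw [← Finset.prod_filter_mul_prod_filter_not Finset.univ (fun i : Fin r => (i:ℕ) < k)]
      congr 1
      · apply Finset.prod_congr rfl
        intro i hi
        simp only [Finset.mem_filter, Finset.mem_univ, true_and] at hi
        have : f i = 0 := (hiff i).mpr hi
        rw [this]
        norm_num
      · have hfe : (Finset.univ.filter (fun i : Fin r => ¬ (i:ℕ) < k)) =
            (Finset.univ.filter (fun i : Fin r => k ≤ (i:ℕ))) := by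
          apply Finset.filter_congr; intro j _; simp [not_lt]
        rw [hfe]
        apply Finset.prod_congr rfl
        intro i hi
        simp only [Finset.mem_filter, Finset.mem_univ, true_and] at hi
        have h0 : f i ≠ 0 := fun hh => by
          have := (hiff i).mp hh
          omega
        have h2 := (f i).isLt
        have h3 : (f i).val ≠ 0 := fun hh => h0 (Fin.ext hh)
        have : f i = 1 := Fin.ext (by omega)
        rw [this]
        norm_num
    · rw [vol_eq hkr f (fun i => hiff i)]
      push_cast
      ring
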